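/- Let C, A : S² → ℝ be continuous with A ≥ 0, and let g : ℝ × S² → ℝ be continuous with compact support. Define S(t) := ∫_{S²} ∫_ℝ max(u − C(n) − t A(n), 0) · g(u,n)² du dσ(n) for t ∈ ℝ. Then S is differentiable on ℝ and S'(t) = − ∫_{S²} A(n) ( ∫_{C(n)+tA(n)}^{∞} g(u,n)² du ) dσ(n). -/

import Mathlib

open MeasureTheory Metric Filter
open scoped Topology InnerProductSpace

noncomputable section

/-- `E3` is Euclidean three-dimensional space. -/
abbrev E3 : Type := EuclideanSpace ℝ (Fin 3)

/-- `S2` is the unit sphere in `E3`. -/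
abbrev S2 : Type := Metric.sphere (0 : E3) 1

/-- The standard surface measure on the unit sphere `S²`. -/
def sphereMeasure : Measure S2 := (volume : Measure E3).toSphere

/-- Derivative of the inner integral `s ↦ ∫ u, max (u - c - s a) 0 * h u`. -/
lemma inner_deriv (c a : ℝ) (ha : 0 ≤ a) (h : ℝ → ℝ) (hh : Continuous h)
    (hsupp : HasCompactSupport h) (t : ℝ) :
    HasDerivAt (fun s : ℝ => ∫ u : ℝ, max (u - c - s * a) 0 * h u)
      (-(a * ∫ u in Set.Ioi (c + t * a), h u)) t := by
  have hInt : Integrable h := hh.integrable_of_hasCompactSupport hsupp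
  have key := hasDerivAt_integral_of_dominated_loc_of_lip
    (F := fun (s : ℝ) (u : ℝ) => max (u - c - s * a) 0 * h u)
    (F' := fun u : ℝ => -(a * Set.indicator (Set.Ioi (c + t * a)) h u))
    (x₀ := t) (bound := fun u : ℝ => a * |h u|) (μ := volume) (s := Metric.ball t 1) (Metric.ball_mem_nhds t one_pos)
    ?_ ?_ ?_ ?_ ?_ ?_
  · have : (∫ u : ℝ, -(a * Set.indicator (Set.Ioi (c + t * a)) h u))
        = -(a * ∫ u in Set.Ioi (c + t * a), h u) := by
      rw [integral_neg, integral_const_mul, integral_indicator measurableSet_Ioi]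
    rw [this] at key
    exact key.2
  · exact Eventually.of_forall fun s =>
      (((continuous_id.sub continuous_const).sub (continuous_const.mul continuous_const)).max
        continuous_const |>.mul hh).aestronglyMeasurable
  · exact (((continuous_id.sub continuous_const).sub
      (continuous_const.mul continuous_const)).max continuous_const |>.mul hh)
      |>.integrable_of_hasCompactSupport (hsupp.mul_left)
  · exact ((hh.measurable.indicator measurableSet_Ioi).const_mul a).neg.aestronglyMeasurable
  · refine Eventually.of_forall fun u => LipschitzOnWith.of_dist_le_mul fun x _ y _ => ?_
    rw [Real.dist_eq, Real.dist_eq]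
    have h1 : |max (u - c - x * a) 0 * h u - max (u - c - y * a) 0 * h u|
        = |max (u - c - x * a) 0 - max (u - c - y * a) 0| * |h u| := by
      rw [← sub_mul, abs_mul]
    rw [h1]
    have h2 : |max (u - c - x * a) 0 - max (u - c - y * a) 0| ≤ a * |x - y| := by
      calc |max (u - c - x * a) 0 - max (u - c - y * a) 0|
          ≤ |(u - c - x * a) - (u - c - y * a)| := abs_max_sub_max_le_abs _ _ _
        _ = a * |x - y| := by
            rw [show (u - c - x * a) - (u - c - y * a) = a * (y - x) by ring, abs_mul,
              abs_of_nonneg ha, abs_sub_comm]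
    calc |max (u - c - x * a) 0 - max (u - c - y * a) 0| * |h u|
        ≤ (a * |x - y|) * |h u| := mul_le_mul_of_nonneg_right h2 (abs_nonneg _)
      _ = (a * |h u|) * |x - y| := by ring
      _ ≤ ↑(Real.nnabs (a * |h u|)) * |x - y| := by
          refine mul_le_mul_of_nonneg_right ?_ (abs_nonneg _)
          rw [Real.coe_nnabs]
          exact le_abs_self _
  · exact (hInt.abs.const_mul a)
  · have hae : ∀ᵐ u : ℝ, u ≠ c + t * a := by
      refine ae_iff.2 ?_
      simpa using measure_singleton (α := ℝ) (c + t * a)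
    filter_upwards [hae] with u hu
    have hcont : Continuous fun s : ℝ => u - c - s * a :=
      (continuous_const.sub (continuous_id.mul continuous_const))
    rcases lt_or_gt_of_ne hu with hlt | hgt
    · have hin : t ∈ {s : ℝ | u - c - s * a < 0} := by simp only [Set.mem_setOf_eq]; linarith
      have hev : ∀ᶠ s in 𝓝 t, u - c - s * a < 0 :=
        eventually_of_mem ((isOpen_lt hcont continuous_const).mem_nhds hin) fun s hs => hs
      have heq : (fun s : ℝ => max (u - c - s * a) 0 * h u) =ᶠ[𝓝 t] fun _ => 0 :=
        hev.mono fun s hs => by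
          show max (u - c - s * a) 0 * h u = 0
          rw [max_eq_right hs.le, zero_mul]
      have hd : HasDerivAt (fun _ : ℝ => (0 : ℝ)) 0 t := hasDerivAt_const t 0
      have hz : Set.indicator (Set.Ioi (c + t * a)) h u = 0 :=
        Set.indicator_of_notMem (by simpa using hlt.le) _
      rw [hz, mul_zero, neg_zero]
      exact hd.congr_of_eventuallyEq heq
    · have hin : t ∈ {s : ℝ | 0 < u - c - s * a} := by simp only [Set.mem_setOf_eq]; linarith
      have hev : ∀ᶠ s in 𝓝 t, 0 < u - c - s * a :=
        eventually_of_mem ((isOpen_lt continuous_const hcont).mem_nhds hin) fun s hs => hs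
      have heq : (fun s : ℝ => max (u - c - s * a) 0 * h u)
          =ᶠ[𝓝 t] fun s => (u - c - s * a) * h u :=
        hev.mono fun s hs => by
          show max (u - c - s * a) 0 * h u = (u - c - s * a) * h u
          rw [max_eq_left hs.le]
      have d1 : HasDerivAt (fun s : ℝ => u - c - s * a) (-a) t := by
        simpa using (hasDerivAt_mul_const (x := t) a).const_sub (u - c)
      have d2 : HasDerivAt (fun s : ℝ => (u - c - s * a) * h u) (-a * h u) t :=
        d1.mul_const (h u)
      have hz : Set.indicator (Set.Ioi (c + t * a)) h u = h u :=
        Set.indicator_of_mem (by simpa using hgt) _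
      rw [hz, ← neg_mul]
      exact d2.congr_of_eventuallyEq heq

theorem statement10 (C A : S2 → ℝ) (hC : Continuous C) (hA : Continuous A)
    (hA0 : ∀ n, 0 ≤ A n) (g : ℝ × S2 → ℝ) (hg : Continuous g)
    (hgsupp : HasCompactSupport g) (t : ℝ) :
    HasDerivAt
      (fun s : ℝ => ∫ n : S2,
        (∫ u : ℝ, max (u - C n - s * A n) 0 * (g (u, n)) ^ 2) ∂sphereMeasure)
      (-∫ n : S2, A n * (∫ u in Set.Ioi (C n + t * A n), (g (u, n)) ^ 2) ∂sphereMeasure)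
      t := by
  haveI : IsFiniteMeasure sphereMeasure := by unfold sphereMeasure; infer_instance
  -- bound on the first coordinate of the support of g
  obtain ⟨R₀, hR₀⟩ := (IsCompact.image hgsupp continuous_fst).exists_bound_of_continuousOn
    continuousOn_id
  set R : ℝ := max R₀ 0 with hRdef
  have hR0 : (0 : ℝ) ≤ R := le_max_right _ _
  have hR : ∀ p : ℝ × S2, p ∈ tsupport g → |p.1| ≤ R := by
    intro p hp
    have h1 : |p.1| ≤ R₀ := by simpa [Real.norm_eq_abs] using hR₀ p.1 ⟨p, hp, rfl⟩
    exact h1.trans (le_max_left _ _)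
  have hgz : ∀ (u : ℝ) (n : S2), u ∉ Set.Icc (-R) R → g (u, n) = 0 := by
    intro u n hu
    apply image_eq_zero_of_notMem_tsupport
    intro hmem
    exact hu (by simpa [Set.mem_Icc, ← abs_le] using hR (u, n) hmem)
  -- bound on |g|
  obtain ⟨M₀, hM₀⟩ := hgsupp.exists_bound_of_continuousOn hg.continuousOn
  set Mg : ℝ := max M₀ 0 with hMgdef
  have hMg : ∀ p, |g p| ≤ Mg := by
    intro p
    by_cases hp : p ∈ tsupport g
    · exact le_trans (by simpa [Real.norm_eq_abs] using hM₀ p hp) (le_max_left _ _)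
    · rw [image_eq_zero_of_notMem_tsupport hp, abs_zero]
      exact le_max_right M₀ 0
  -- bounds on |C| and |A|
  obtain ⟨BC₀, hBC₀⟩ := isCompact_univ.exists_bound_of_continuousOn hC.continuousOn
  obtain ⟨BA₀, hBA₀⟩ := isCompact_univ.exists_bound_of_continuousOn hA.continuousOn
  set BC : ℝ := max BC₀ 0 with hBCdef
  set BA : ℝ := max BA₀ 0 with hBAdef
  have hBC : ∀ n, |C n| ≤ BC := fun n =>
    le_trans (by simpa [Real.norm_eq_abs] using hBC₀ n (Set.mem_univ n)) (le_max_left _ _)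
  have hBA : ∀ n, |A n| ≤ BA := fun n =>
    le_trans (by simpa [Real.norm_eq_abs] using hBA₀ n (Set.mem_univ n)) (le_max_left _ _)
  -- the majorant ψ
  set ψ : ℝ → ℝ := Set.indicator (Set.Icc (-R) R) (fun _ => Mg ^ 2) with hψdef
  have hψint : Integrable ψ := by
    rw [hψdef, integrable_indicator_iff measurableSet_Icc]
    exact integrableOn_const measure_Icc_lt_top.ne
  have hψnn : ∀ u, 0 ≤ ψ u := fun u =>
    Set.indicator_nonneg (fun _ _ => sq_nonneg Mg) u
  have hhψ : ∀ (n : S2) (u : ℝ), |(g (u, n)) ^ 2| ≤ ψ u := by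
    intro n u
    by_cases hu : u ∈ Set.Icc (-R) R
    · rw [hψdef, Set.indicator_of_mem hu, abs_pow]
      exact pow_le_pow_left₀ (abs_nonneg _) (hMg (u, n)) 2
    · rw [hgz u n hu, hψdef, Set.indicator_of_notMem hu]
      simp
  set Iψ : ℝ := ∫ u : ℝ, ψ u with hIψdef
  have hIψnn : 0 ≤ Iψ := integral_nonneg hψnn
  -- the family of inner functions
  have hcontg : ∀ n : S2, Continuous (fun u : ℝ => (g (u, n)) ^ 2) := fun n =>
    (hg.comp (continuous_id.prodMk continuous_const)).pow 2
  have hsuppg : ∀ n : S2, HasCompactSupport (fun u : ℝ => (g (u, n)) ^ 2) := by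
    intro n
    apply HasCompactSupport.intro (isCompact_Icc (a := -R) (b := R))
    intro u hu
    rw [hgz u n hu]
    ring
  have hFu : ∀ (s : ℝ) (n : S2),
      Integrable (fun u : ℝ => max (u - C n - s * A n) 0 * (g (u, n)) ^ 2) := by
    intro s n
    exact (((continuous_id.sub continuous_const).sub
      (continuous_const.mul continuous_const)).max continuous_const |>.mul (hcontg n))
      |>.integrable_of_hasCompactSupport ((hsuppg n).mul_left)
  -- the pointwise Lipschitz-type estimate
  have hptwise : ∀ (n : S2) (x y : ℝ) (u : ℝ),
      |max (u - C n - x * A n) 0 * (g (u, n)) ^ 2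
        - max (u - C n - y * A n) 0 * (g (u, n)) ^ 2|
      ≤ (A n * |x - y|) * ψ u := by
    intro n x y u
    rw [← sub_mul, abs_mul]
    have h2 : |max (u - C n - x * A n) 0 - max (u - C n - y * A n) 0| ≤ A n * |x - y| := by
      calc |max (u - C n - x * A n) 0 - max (u - C n - y * A n) 0|
          ≤ |(u - C n - x * A n) - (u - C n - y * A n)| := abs_max_sub_max_le_abs _ _ _
        _ = A n * |x - y| := by
            rw [show (u - C n - x * A n) - (u - C n - y * A n) = A n * (y - x) by ring,
              abs_mul, abs_of_nonneg (hA0 n), abs_sub_comm]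
    exact mul_le_mul h2 (hhψ n u) (abs_nonneg _)
      (mul_nonneg (hA0 n) (abs_nonneg _))
  -- measurability of the inner integrals, for every parameter s
  have hmeas : ∀ s : ℝ, AEStronglyMeasurable
      (fun n : S2 => ∫ u : ℝ, max (u - C n - s * A n) 0 * (g (u, n)) ^ 2)
      sphereMeasure := by
    intro s
    have hcont : Continuous fun p : S2 × ℝ =>
        max (p.2 - C p.1 - s * A p.1) 0 * (g (p.2, p.1)) ^ 2 :=
      (((continuous_snd.sub (hC.comp continuous_fst)).sub
        (continuous_const.mul (hA.comp continuous_fst))).max continuous_const).mul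
        ((hg.comp (continuous_snd.prodMk continuous_fst)).pow 2)
    exact hcont.stronglyMeasurable.integral_prod_right'.aestronglyMeasurable
  -- apply the dominated differentiation theorem over the sphere
  have key := hasDerivAt_integral_of_dominated_loc_of_lip
    (F := fun (s : ℝ) (n : S2) =>
      ∫ u : ℝ, max (u - C n - s * A n) 0 * (g (u, n)) ^ 2)
    (F' := fun n : S2 => -(A n * ∫ u in Set.Ioi (C n + t * A n), (g (u, n)) ^ 2))
    (x₀ := t) (bound := fun n : S2 => A n * Iψ) (μ := sphereMeasure) (s := Metric.ball t 1) (Metric.ball_mem_nhds t one_pos)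
    (Eventually.of_forall hmeas) ?_ ?_ ?_ ?_ ?_
  · have : (∫ n : S2, -(A n * ∫ u in Set.Ioi (C n + t * A n), (g (u, n)) ^ 2) ∂sphereMeasure)
        = -∫ n : S2, A n * (∫ u in Set.Ioi (C n + t * A n), (g (u, n)) ^ 2) ∂sphereMeasure :=
      integral_neg _
    rw [this] at key
    exact key.2
  · -- integrability of F t
    refine (integrable_const ((R + BC + |t| * BA) * Iψ)).mono' (hmeas t) ?_
    refine Eventually.of_forall fun n => ?_
    rw [Real.norm_eq_abs]
    calc |∫ u : ℝ, max (u - C n - t * A n) 0 * (g (u, n)) ^ 2|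
        ≤ ∫ u : ℝ, |max (u - C n - t * A n) 0 * (g (u, n)) ^ 2| := by
          simpa only [Real.norm_eq_abs] using norm_integral_le_integral_norm
            (fun u : ℝ => max (u - C n - t * A n) 0 * (g (u, n)) ^ 2)
      _ ≤ ∫ u : ℝ, (R + BC + |t| * BA) * ψ u := by
          refine integral_mono (hFu t n).abs (hψint.const_mul _) fun u => ?_
          by_cases hu : u ∈ Set.Icc (-R) R
          · rw [abs_mul]
            refine mul_le_mul ?_ (hhψ n u) (abs_nonneg _) ?_
            · have h1 : |max (u - C n - t * A n) 0| ≤ |u - C n - t * A n| := by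
                rw [abs_of_nonneg (le_max_right _ _)]
                exact max_le (le_abs_self _) (abs_nonneg _)
              have h2 : |u - C n - t * A n| ≤ |u - C n| + |t * A n| := abs_sub _ _
              have h3 : |u - C n| ≤ |u| + |C n| := abs_sub _ _
              have h4 : |u| ≤ R := abs_le.2 ⟨hu.1, hu.2⟩
              have h5 : |t * A n| ≤ |t| * BA := by
                rw [abs_mul]
                exact mul_le_mul_of_nonneg_left (hBA n) (abs_nonneg t)
              have h6 := hBC n
              linarith
            · have : 0 ≤ BC := le_trans (abs_nonneg _) (hBC n)
              have : 0 ≤ BA := le_trans (abs_nonneg _) (hBA n)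
              positivity
          · have hz : (g (u, n)) ^ 2 = 0 := by rw [hgz u n hu]; ring
            have hz2 : ψ u = 0 := by rw [hψdef, Set.indicator_of_notMem hu]
            rw [hz, hz2, mul_zero, mul_zero, abs_zero]
      _ = (R + BC + |t| * BA) * Iψ := integral_const_mul _ _
  · -- measurability of F'
    have hset : MeasurableSet {q : S2 × ℝ | C q.1 + t * A q.1 < q.2} :=
      measurableSet_lt ((hC.measurable.comp measurable_fst).add
        ((hA.measurable.comp measurable_fst).const_mul t)) measurable_snd
    have hΦ : Measurable (Set.indicator {q : S2 × ℝ | C q.1 + t * A q.1 < q.2}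
        (fun q : S2 × ℝ => (g (q.2, q.1)) ^ 2)) :=
      Measurable.indicator ((hg.measurable.comp (measurable_snd.prodMk measurable_fst)).pow
        measurable_const) hset
    have m1 : StronglyMeasurable fun n : S2 => ∫ u : ℝ,
        Set.indicator {q : S2 × ℝ | C q.1 + t * A q.1 < q.2}
          (fun q : S2 × ℝ => (g (q.2, q.1)) ^ 2) (n, u) :=
      hΦ.stronglyMeasurable.integral_prod_right'
    have heq : (fun n : S2 => ∫ u in Set.Ioi (C n + t * A n), (g (u, n)) ^ 2)
        = fun n : S2 => ∫ u : ℝ,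
            Set.indicator {q : S2 × ℝ | C q.1 + t * A q.1 < q.2}
              (fun q : S2 × ℝ => (g (q.2, q.1)) ^ 2) (n, u) := by
      funext n
      rw [← integral_indicator measurableSet_Ioi]
      congr 1
    refine AEStronglyMeasurable.neg ?_
    refine hA.aestronglyMeasurable.mul ?_
    rw [heq]
    exact m1.aestronglyMeasurable
  · -- Lipschitz estimate
    refine Eventually.of_forall fun n => LipschitzOnWith.of_dist_le_mul fun x _ y _ => ?_
    rw [Real.dist_eq, Real.dist_eq]
    calc |(∫ u : ℝ, max (u - C n - x * A n) 0 * (g (u, n)) ^ 2)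
          - ∫ u : ℝ, max (u - C n - y * A n) 0 * (g (u, n)) ^ 2|
        = |∫ u : ℝ, (max (u - C n - x * A n) 0 * (g (u, n)) ^ 2
            - max (u - C n - y * A n) 0 * (g (u, n)) ^ 2)| := by
          rw [integral_sub (hFu x n) (hFu y n)]
      _ ≤ ∫ u : ℝ, |max (u - C n - x * A n) 0 * (g (u, n)) ^ 2
            - max (u - C n - y * A n) 0 * (g (u, n)) ^ 2| := by
          simpa only [Real.norm_eq_abs] using norm_integral_le_integral_norm
            (fun u : ℝ => max (u - C n - x * A n) 0 * (g (u, n)) ^ 2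
              - max (u - C n - y * A n) 0 * (g (u, n)) ^ 2)
      _ ≤ ∫ u : ℝ, (A n * |x - y|) * ψ u := by
          exact integral_mono ((hFu x n).sub (hFu y n)).abs (hψint.const_mul _)
            fun u => hptwise n x y u
      _ = (A n * Iψ) * |x - y| := by rw [integral_const_mul]; ring
      _ ≤ ↑(Real.nnabs (A n * Iψ)) * |x - y| := by
          refine mul_le_mul_of_nonneg_right ?_ (abs_nonneg _)
          rw [Real.coe_nnabs]
          exact le_abs_self _
  · -- integrability of the bound
    refine (integrable_const (BA * Iψ)).mono'
      (hA.aestronglyMeasurable.mul aestronglyMeasurable_const) ?_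
    refine Eventually.of_forall fun n => ?_
    rw [Real.norm_eq_abs, abs_mul, abs_of_nonneg hIψnn]
    exact mul_le_mul_of_nonneg_right (hBA n) hIψnn
  · -- a.e. differentiability: the inner lemma
    exact Eventually.of_forall fun n =>
      inner_deriv (C n) (A n) (hA0 n) (fun u => (g (u, n)) ^ 2) (hcontg n) (hsuppg n) t
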